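/- Let k > r ≥ 2 be integers and set C = binomial(r+r², r) + 1. Let G be a finite simple graph containing an independent set X of size C such that no k+1 vertices of X have a common neighbour in G. Then for every r-partite r-graph H satisfying the (r,k)-cover property, there exists an edge-colouring of G with colours 1,…,r+1 such that every collection of monochromatic components covering V(G) has size at least τ(H) + 1. -/

import Mathlib

open Finset

section Boll

variable {α : Type*} [Fintype α] [LinearOrder α]

/-- sum decomposition of a disjoint union of finsets -/
noncomputable def unionSumEquiv [DecidableEq α] (QA QB : Finset α) (hd : Disjoint QA QB) :
    {x // x ∈ QA ∪ QB} ≃ ({x // x ∈ QA} ⊕ {x // x ∈ QB}) where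
  toFun x := if h : (x : α) ∈ QA then Sum.inl ⟨x, h⟩ else
    Sum.inr ⟨x, (Finset.mem_union.1 x.2).resolve_left h⟩
  invFun y := y.elim (fun a => ⟨a.1, Finset.mem_union_left _ a.2⟩)
    (fun b => ⟨b.1, Finset.mem_union_right _ b.2⟩)
  left_inv x := by by_cases h : (x : α) ∈ QA <;> simp [h]
  right_inv y := by
    rcases y with a | b
    · simp
    · have : (b : α) ∉ QA := fun h => (Finset.disjoint_left.1 hd h) b.2
      simp [this]

noncomputable def sortPerm [DecidableEq α] (QA QB : Finset α) (hd : Disjoint QA QB) :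
    Equiv.Perm α :=
  Equiv.Perm.subtypeCongr
    (((unionSumEquiv QA QB hd).trans
      ((Equiv.sumCongr (QA.orderIsoOfFin rfl).toEquiv.symm
          (QB.orderIsoOfFin rfl).toEquiv.symm).trans
        (finSumFinEquiv.trans
          ((QA ∪ QB).orderIsoOfFin (Finset.card_union_of_disjoint hd)).toEquiv))))
    (Equiv.refl _)

variable [DecidableEq α] {QA QB : Finset α} (hd : Disjoint QA QB)

theorem sortPerm_not_mem {x : α} (hx : x ∉ QA ∪ QB) : sortPerm QA QB hd x = x := by
  rw [sortPerm, Equiv.Perm.subtypeCongr.right_apply _ _ hx]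
  rfl

theorem sortPerm_mem {x : α} (hx : x ∈ QA ∪ QB) : sortPerm QA QB hd x ∈ QA ∪ QB := by
  rw [sortPerm, Equiv.Perm.subtypeCongr.left_apply _ _ hx]
  exact Subtype.mem _

theorem sortPerm_lt {x y : α} (hx : x ∈ QA) (hy : y ∈ QB) :
    sortPerm QA QB hd x < sortPerm QA QB hd y := by
  have hx' : x ∈ QA ∪ QB := Finset.mem_union_left _ hx
  have hy' : y ∈ QA ∪ QB := Finset.mem_union_right _ hy
  rw [sortPerm, Equiv.Perm.subtypeCongr.left_apply _ _ hx',
    Equiv.Perm.subtypeCongr.left_apply _ _ hy']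
  have hxQA : ((⟨x, hx'⟩ : {z // z ∈ QA ∪ QB}) : α) ∈ QA := hx
  have hyQB : ((⟨y, hy'⟩ : {z // z ∈ QA ∪ QB}) : α) ∉ QA :=
    fun h => (Finset.disjoint_left.1 hd h) hy
  simp only [Equiv.trans_apply, unionSumEquiv, Equiv.coe_fn_mk, hxQA, hyQB, dif_pos, dif_neg,
    not_false_iff, Equiv.sumCongr_apply, Sum.map_inl, Sum.map_inr, finSumFinEquiv_apply_left,
    finSumFinEquiv_apply_right]
  have : (Fin.castAdd QB.card ((QA.orderIsoOfFin rfl).toEquiv.symm ⟨x, hxQA⟩)) <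
      (Fin.natAdd QA.card ((QB.orderIsoOfFin rfl).toEquiv.symm
        ⟨y, (Finset.mem_union.1 hy').resolve_left hyQB⟩)) := by
    simp only [Fin.lt_def, Fin.coe_castAdd, Fin.coe_natAdd]
    exact lt_of_lt_of_le (Fin.is_lt _) (Nat.le_add_right _ _)
  have h2 := ((QA ∪ QB).orderIsoOfFin (Finset.card_union_of_disjoint hd)).strictMono this
  exact h2


theorem sortPerm_congr {QA QB QA' QB' : Finset α} (h1 : QA = QA') (h2 : QB = QB')
    (hd : Disjoint QA QB) (hd' : Disjoint QA' QB') :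
    sortPerm QA QB hd = sortPerm QA' QB' hd' := by
  subst h1; subst h2; rfl

theorem choose_le_choose_add (n k d : ℕ) : Nat.choose n k ≤ Nat.choose (n + d) (k + d) := by
  induction d with
  | zero => simp
  | succ d ih =>
    refine ih.trans ?_
    have h : Nat.choose (n + (d+1)) (k + (d+1)) = Nat.choose (n+d) (k+d) + Nat.choose (n+d) ((k+d)+1) := by
      rw [show n + (d+1) = (n+d)+1 by omega, show k + (d+1) = (k+d)+1 by omega]
      exact Nat.choose_succ_succ _ _
    omega

theorem choose_mono₂ {a' b' a b : ℕ} (ha : a' ≤ a) (hb : b' ≤ b) :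
    Nat.choose (a' + b') a' ≤ Nat.choose (a + b) a := by
  have h1 : Nat.choose (a' + b') a' ≤ Nat.choose (a' + b' + (a - a')) (a' + (a - a')) :=
    choose_le_choose_add _ _ _
  have e1 : a' + b' + (a - a') = a + b' := by omega
  have e2 : a' + (a - a') = a := by omega
  rw [e1, e2] at h1
  exact h1.trans (Nat.choose_le_choose a (by omega))

theorem bollobas {ι : Type*} [Fintype ι]
    (A B : ι → Finset α) (a b : ℕ)
    (hA : ∀ i, (A i).card ≤ a) (hB : ∀ i, (B i).card ≤ b)
    (hdisj : ∀ i, Disjoint (A i) (B i))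
    (hcross : ∀ i j, i ≠ j → ¬ Disjoint (A i) (B j)) :
    Fintype.card ι ≤ (a + b).choose a := by
  classical
  set P : ι → Finset (Equiv.Perm α) := fun i =>
    Finset.univ.filter (fun σ => ∀ x ∈ A i, ∀ y ∈ B i, σ x < σ y) with hP
  have hdimg : ∀ i (σ : Equiv.Perm α), Disjoint ((A i).image σ) ((B i).image σ) :=
    fun i σ => (Finset.disjoint_image σ.injective).2 (hdisj i)
  set srt : ι → Equiv.Perm α → Equiv.Perm α := fun i σ =>
    σ.trans (sortPerm ((A i).image σ) ((B i).image σ) (hdimg i σ)) with hsrt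
  have hsrtP : ∀ i σ, srt i σ ∈ P i := by
    intro i σ
    simp only [hP, Finset.mem_filter, Finset.mem_univ, true_and]
    intro x hx y hy
    exact sortPerm_lt _ (Finset.mem_image_of_mem σ hx) (Finset.mem_image_of_mem σ hy)
  have himg : ∀ i σ, ((A i) ∪ (B i)).image (srt i σ) = ((A i) ∪ (B i)).image σ := by
    intro i σ
    have h1 : ((A i) ∪ (B i)).image (srt i σ)
        = (((A i) ∪ (B i)).image σ).image (sortPerm _ _ (hdimg i σ)) := by
      rw [Finset.image_image]; rfl
    rw [h1]
    apply Finset.eq_of_subset_of_card_le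
    · intro x hx
      obtain ⟨q, hq, rfl⟩ := Finset.mem_image.1 hx
      rw [Finset.image_union] at hq ⊢
      exact sortPerm_mem _ hq
    · rw [Finset.card_image_of_injective _ (Equiv.injective _),
        Finset.card_image_of_injective _ (Equiv.injective _),
        Finset.card_image_of_injective _ (Equiv.injective _)]
  -- fibers of srt i are small
  have hfib : ∀ i σ', σ' ∈ Finset.univ.image (srt i) →
      (Finset.univ.filter (fun σ => srt i σ = σ')).card ≤ (a+b).choose a := by
    intro i σ' _
    have hmapsto : ∀ σ ∈ Finset.univ.filter (fun σ => srt i σ = σ'),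
        (A i).image σ ∈ (((A i) ∪ (B i)).image σ').powersetCard (A i).card := by
      intro σ hσ
      rw [Finset.mem_filter] at hσ
      rw [Finset.mem_powersetCard]
      refine ⟨?_, Finset.card_image_of_injective _ (Equiv.injective _)⟩
      rw [← hσ.2, himg]
      intro x hx
      exact Finset.mem_image.2 (by
        obtain ⟨q, hq, rfl⟩ := Finset.mem_image.1 hx
        exact ⟨q, Finset.mem_union_left _ hq, rfl⟩)
    have hinj : ∀ σ₁ ∈ Finset.univ.filter (fun σ => srt i σ = σ'),
        ∀ σ₂ ∈ Finset.univ.filter (fun σ => srt i σ = σ'),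
        (A i).image σ₁ = (A i).image σ₂ → σ₁ = σ₂ := by
      intro σ₁ h₁ σ₂ h₂ hQA
      rw [Finset.mem_filter] at h₁ h₂
      have hQ : ((A i) ∪ (B i)).image σ₁ = ((A i) ∪ (B i)).image σ₂ := by
        rw [← himg i σ₁, ← himg i σ₂, h₁.2, h₂.2]
      have hQB : (B i).image σ₁ = (B i).image σ₂ := by
        have e1 : ∀ σ : Equiv.Perm α, ((A i) ∪ (B i)).image σ = (A i).image σ ∪ (B i).image σ :=
          fun σ => Finset.image_union _ _
        have := hQ
        rw [e1, e1] at this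
        have g1 : ((A i).image σ₁ ∪ (B i).image σ₁) \ ((A i).image σ₁) = (B i).image σ₁ :=
          Finset.union_sdiff_cancel_left (hdimg i σ₁)
        have g2 : ((A i).image σ₂ ∪ (B i).image σ₂) \ ((A i).image σ₂) = (B i).image σ₂ :=
          Finset.union_sdiff_cancel_left (hdimg i σ₂)
        rw [← g1, ← g2, this, hQA]
      have hπ : sortPerm ((A i).image σ₁) ((B i).image σ₁) (hdimg i σ₁)
          = sortPerm ((A i).image σ₂) ((B i).image σ₂) (hdimg i σ₂) :=
        sortPerm_congr hQA hQB _ _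
      have e1 : σ₁.trans (sortPerm ((A i).image σ₁) ((B i).image σ₁) (hdimg i σ₁)) = σ' := h₁.2
      have e2 : σ₂.trans (sortPerm ((A i).image σ₂) ((B i).image σ₂) (hdimg i σ₂)) = σ' := h₂.2
      rw [← hπ] at e2
      set π := sortPerm ((A i).image σ₁) ((B i).image σ₁) (hdimg i σ₁)
      have : σ₁ = σ'.trans π.symm := by
        rw [← e1, Equiv.trans_assoc, Equiv.self_trans_symm, Equiv.trans_refl]
      have h2' : σ₂ = σ'.trans π.symm := by
        rw [← e2, Equiv.trans_assoc, Equiv.self_trans_symm, Equiv.trans_refl]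
      rw [this, h2']
    have hcard := Finset.card_le_card_of_injOn
      (f := fun σ : Equiv.Perm α => (A i).image (⇑σ)) hmapsto
      (fun σ₁ h₁ σ₂ h₂ h => hinj σ₁ (Finset.mem_coe.1 h₁) σ₂ (Finset.mem_coe.1 h₂) h)
    refine hcard.trans ?_
    rw [Finset.card_powersetCard]
    have hQcard : (((A i) ∪ (B i)).image σ').card ≤ (A i).card + (B i).card :=
      (Finset.card_image_le).trans (Finset.card_union_le _ _)
    calc (((A i) ∪ (B i)).image σ').card.choose (A i).card
        ≤ ((A i).card + (B i).card).choose (A i).card := by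
          -- top monotone; but careful: need bottom ≤ top etc.
          exact Nat.choose_le_choose _ hQcard
      _ ≤ (a + b).choose a := choose_mono₂ (hA i) (hB i)
  have hΩ : ∀ i, Fintype.card (Equiv.Perm α) ≤ (a+b).choose a * ((P i).card) := by
    intro i
    have h1 := Finset.card_le_mul_card_image (f := srt i) Finset.univ ((a+b).choose a) (hfib i)
    rw [Finset.card_univ] at h1
    refine h1.trans (Nat.mul_le_mul_left _ ?_)
    apply Finset.card_le_card
    intro σ' hσ'
    obtain ⟨σ, _, rfl⟩ := Finset.mem_image.1 hσ'
    exact hsrtP i σ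
  have hdisjP : ∀ i ∈ (Finset.univ : Finset ι), ∀ j ∈ (Finset.univ : Finset ι), i ≠ j →
      Disjoint (P i) (P j) := by
    intro i _ j _ hij
    rw [Finset.disjoint_left]
    intro σ hσi hσj
    rw [hP, Finset.mem_filter] at hσi hσj
    obtain ⟨u, hu1, hu2⟩ := Finset.not_disjoint_iff.1 (hcross i j hij)
    obtain ⟨v, hv1, hv2⟩ := Finset.not_disjoint_iff.1 (hcross j i hij.symm)
    have l1 : σ u < σ v := hσi.2 u hu1 v hv2
    have l2 : σ v < σ u := hσj.2 v hv1 u hu2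
    exact absurd l1 (not_lt_of_gt l2)
  have hsum : ∑ i : ι, (P i).card ≤ Fintype.card (Equiv.Perm α) := by
    rw [← Finset.card_biUnion hdisjP]
    simpa using Finset.card_le_card (Finset.subset_univ _)
  have hmain : Fintype.card ι * Fintype.card (Equiv.Perm α)
      ≤ (a+b).choose a * Fintype.card (Equiv.Perm α) := by
    calc Fintype.card ι * Fintype.card (Equiv.Perm α)
        = ∑ _i : ι, Fintype.card (Equiv.Perm α) := by
          rw [Finset.sum_const, Finset.card_univ, smul_eq_mul]
      _ ≤ ∑ i : ι, (a+b).choose a * (P i).card := Finset.sum_le_sum (fun i _ => hΩ i)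
      _ = (a+b).choose a * ∑ i : ι, (P i).card := by rw [Finset.mul_sum]
      _ ≤ (a+b).choose a * Fintype.card (Equiv.Perm α) :=
          Nat.mul_le_mul_left _ hsum
  have hpos : 0 < Fintype.card (Equiv.Perm α) := Fintype.card_pos
  exact Nat.le_of_mul_le_mul_right hmain hpos

end Boll




/-- A set of vertices `T` covers a hypergraph with edge family `E` if it meets every edge. -/
def IsCover {V : Type*} (E : Set (Set V)) (T : Set V) : Prop :=
  ∀ e ∈ E, (e ∩ T).Nonempty

/-- The cover number of a hypergraph: minimum size of a cover. -/
noncomputable def coverNumber {V : Type*} (E : Set (Set V)) : ℕ :=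
  sInf {n | ∃ T : Set V, T.ncard = n ∧ IsCover E T}

/-- The `(k,ℓ)`-cover property: any at most `k` edges have a cover of size at most `ℓ`. -/
def CoverProperty {V : Type*} (E : Set (Set V)) (k ℓ : ℕ) : Prop :=
  ∀ S ⊆ E, S.ncard ≤ k → ∃ T : Set V, T.ncard ≤ ℓ ∧ IsCover S T

/-- `E` is an `r`-partite `r`-graph w.r.t. the partition `part`. -/
def IsPartite {V : Type*} (r : ℕ) (part : V → Fin r) (E : Set (Set V)) : Prop :=
  ∀ e ∈ E, ∀ i : Fin r, (e ∩ part ⁻¹' {i}).ncard = 1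

/-- A transversal cover: a cover containing exactly one vertex from each part. -/
def IsTransversalCover {V : Type*} (r : ℕ) (part : V → Fin r) (E : Set (Set V))
    (T : Set V) : Prop :=
  IsCover E T ∧ ∀ i : Fin r, (T ∩ part ⁻¹' {i}).ncard = 1

/-- The `(r,k)`-cover property: any at most `k` edges have a transversal cover. -/
def PartiteCoverProperty {V : Type*} (r : ℕ) (part : V → Fin r) (E : Set (Set V))
    (k : ℕ) : Prop :=
  ∀ S ⊆ E, S.ncard ≤ k → ∃ T : Set V, IsTransversalCover r part S T

/-- The spanning subgraph of `G` consisting of the edges of colour `i`. -/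
def colorSubgraph {V : Type*} (G : SimpleGraph V) {r : ℕ} (c : Sym2 V → Fin r)
    (i : Fin r) : SimpleGraph V where
  Adj u v := G.Adj u v ∧ c s(u, v) = i
  symm := ⟨fun u v h => ⟨h.1.symm, by rw [Sym2.eq_swap]; exact h.2⟩⟩
  loopless := ⟨fun v h => G.loopless.irrefl v h.1⟩

/-- given a graph `G` with an independent set `X` of size
`C(r+r², r) + 1` in which no `k+1` vertices have a common neighbour, and given any
`r`-partite `r`-graph `H` with the `(r,k)`-cover property, there is an
`(r+1)`-edge-colouring of `G` for which every cover of `V(G)` by monochromatic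
components has size at least `τ(H) + 1`. -/
theorem stmt4 {VG : Type} [Fintype VG] (r k : ℕ) (hr : 2 ≤ r) (hk : r < k)
    (G : SimpleGraph VG) (X : Finset VG)
    (hXcard : X.card = (r + r ^ 2).choose r + 1)
    (hXind : ∀ u ∈ X, ∀ v ∈ X, u ≠ v → ¬ G.Adj u v)
    (hXnbr : ∀ S ⊆ X, k + 1 ≤ S.card → ¬ ∃ v : VG, ∀ u ∈ S, G.Adj v u)
    (W : Type) [Fintype W] (part : W → Fin r) (E : Set (Set W))
    (hpart : IsPartite r part E) (hprop : PartiteCoverProperty r part E k) :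
    ∃ c : Sym2 VG → Fin (r + 1),
      ∀ S : Finset (Fin (r + 1) × VG),
        (∀ v : VG, ∃ p ∈ S, (colorSubgraph G c p.1).Reachable p.2 v) →
        coverNumber E + 1 ≤ S.card := by
  classical
  set τ := coverNumber E with hτdef
  have hXne : X.Nonempty := Finset.card_pos.1 (by rw [hXcard]; omega)
  obtain ⟨xs, hxs⟩ := hXne
  by_cases hτ0 : τ = 0
  · refine ⟨fun _ => 0, fun S hS => ?_⟩
    obtain ⟨p, hp, -⟩ := hS xs
    have : 0 < S.card := Finset.card_pos.2 ⟨p, hp⟩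
    omega
  have hτ1 : 1 ≤ τ := Nat.one_le_iff_ne_zero.2 hτ0
  -- basic facts
  have hτ_le : ∀ T : Set W, IsCover E T → τ ≤ T.ncard := fun T hT => Nat.sInf_le ⟨T, rfl, hT⟩
  have hedge_ne : ∀ e ∈ E, e.Nonempty := by
    intro e he
    have h0 := hpart e he ⟨0, by omega⟩
    obtain ⟨w, hw⟩ := Set.ncard_eq_one.1 h0
    exact ⟨w, (show w ∈ e ∩ part ⁻¹' {⟨0, by omega⟩} by rw [hw]; rfl).1⟩
  have hEx : ∃ e, e ∈ E := by
    by_contra h; push_neg at h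
    have hcov : IsCover E ∅ := fun e he => absurd he (h e)
    have := hτ_le ∅ hcov
    simp [Set.ncard_empty] at this
    omega
  obtain ⟨e₀, he₀⟩ := hEx
  obtain ⟨w₀, hw₀⟩ := hedge_ne e₀ he₀
  have hWne : Nonempty W := ⟨w₀⟩
  have htrans_card : ∀ T : Set W, (∀ i : Fin r, (T ∩ part ⁻¹' {i}).ncard = 1) → T.ncard ≤ r := by
    intro T hT
    have hinj : Set.InjOn part T := by
      intro x hx y hy hxy
      obtain ⟨w, hw⟩ := Set.ncard_eq_one.1 (hT (part x))
      have hxw : x ∈ T ∩ part ⁻¹' {part x} := ⟨hx, rfl⟩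
      have hyw : y ∈ T ∩ part ⁻¹' {part x} := ⟨hy, by simp [← hxy]⟩
      rw [hw] at hxw hyw
      rw [Set.mem_singleton_iff.1 hxw, Set.mem_singleton_iff.1 hyw]
    have h2 := Set.ncard_le_ncard_of_injOn part (fun a _ => Set.mem_univ (part a)) hinj
      Set.finite_univ
    simpa [Set.ncard_univ] using h2
  have hedgecard : ∀ e ∈ E, e.ncard ≤ r := by
    intro e he
    have hinj : Set.InjOn part e := by
      intro x hx y hy hxy
      obtain ⟨w, hw⟩ := Set.ncard_eq_one.1 (hpart e he (part x))
      have hxw : x ∈ e ∩ part ⁻¹' {part x} := ⟨hx, rfl⟩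
      have hyw : y ∈ e ∩ part ⁻¹' {part x} := ⟨hy, by simp [← hxy]⟩
      rw [hw] at hxw hyw
      rw [Set.mem_singleton_iff.1 hxw, Set.mem_singleton_iff.1 hyw]
    have h2 := Set.ncard_le_ncard_of_injOn part (fun a _ => Set.mem_univ (part a)) hinj
      Set.finite_univ
    simpa [Set.ncard_univ] using h2
  -- Step 1 : τ ≤ r * r
  have hτr2 : τ ≤ r * r := by
    obtain ⟨M, hMs, hMmax⟩ := Set.Finite.exists_maximalFor (id : Set (Set W) → Set (Set W))
      {M | M ⊆ E ∧ M.Pairwise fun e f => e ∩ f = ∅} (Set.toFinite _)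
      ⟨∅, Set.empty_subset _, Set.pairwise_empty _⟩
    obtain ⟨hME, hMdisj⟩ := hMs
    have hMfin : M.Finite := Set.toFinite _
    have hMcard : M.ncard ≤ r := by
      by_contra hcon
      push_neg at hcon
      obtain ⟨M', hM'sub, hM'card⟩ := Set.exists_subset_card_eq (show r + 1 ≤ M.ncard by omega)
      obtain ⟨T, hTcov, hTpart⟩ := hprop M' (hM'sub.trans hME) (by rw [hM'card]; omega)
      set f : Set W → W := fun g => if h : (g ∩ T).Nonempty then h.some else w₀ with hf
      have hmapsto : ∀ g ∈ M', f g ∈ T := by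
        intro g hg
        have hne : (g ∩ T).Nonempty := hTcov g hg
        rw [hf]; simp only [dif_pos hne]
        exact hne.some_mem.2
      have hinj : Set.InjOn f M' := by
        intro g1 h1 g2 h2 hfe
        by_contra hne
        have hd := hMdisj (hM'sub h1) (hM'sub h2) hne
        have hne1 : (g1 ∩ T).Nonempty := hTcov g1 h1
        have hne2 : (g2 ∩ T).Nonempty := hTcov g2 h2
        rw [hf] at hfe; simp only [dif_pos hne1, dif_pos hne2] at hfe
        have hmem : hne1.some ∈ g1 ∩ g2 := ⟨hne1.some_mem.1, by rw [hfe]; exact hne2.some_mem.1⟩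
        rw [hd] at hmem
        exact hmem
      have := Set.ncard_le_ncard_of_injOn f hmapsto hinj (Set.toFinite T)
      have hTr := htrans_card T hTpart
      omega
    have hZcov : IsCover E (⋃₀ M) := by
      intro e he
      by_contra hcon
      rw [Set.not_nonempty_iff_eq_empty] at hcon
      have heM : e ∉ M := by
        intro h
        obtain ⟨w, hw⟩ := hedge_ne e he
        have : w ∈ e ∩ ⋃₀ M := ⟨hw, Set.subset_sUnion_of_mem h hw⟩
        rw [hcon] at this
        exact this
      have hins : (insert e M) ∈ {M | M ⊆ E ∧ M.Pairwise fun e f => e ∩ f = ∅} := by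
        constructor
        · exact Set.insert_subset he hME
        · intro a ha b hb hab
          rcases ha with rfl | ha <;> rcases hb with rfl | hb
          · exact absurd rfl hab
          · apply Set.eq_empty_iff_forall_notMem.2
            intro w hw
            have : w ∈ a ∩ ⋃₀ M := ⟨hw.1, Set.subset_sUnion_of_mem hb hw.2⟩
            rw [hcon] at this; exact this
          · apply Set.eq_empty_iff_forall_notMem.2
            intro w hw
            have : w ∈ b ∩ ⋃₀ M := ⟨hw.2, Set.subset_sUnion_of_mem ha hw.1⟩
            rw [hcon] at this; exact this
          · exact hMdisj ha hb hab
      have heq := hMmax hins (Set.subset_insert e M)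
      simp only [id] at heq
      exact heM (heq (Set.mem_insert e M))
    have hZcard : (⋃₀ M).ncard ≤ M.ncard * r := by
      have key : ∀ M' : Set (Set W), M'.Finite → M' ⊆ E → (⋃₀ M').ncard ≤ M'.ncard * r := by
        intro M' hfin
        refine Set.Finite.induction_on
          (motive := fun s _ => s ⊆ E → (⋃₀ s).ncard ≤ s.ncard * r) M' hfin (fun _ => by simp) ?_
        intro a s ha hs ih hsub
        · rw [Set.sUnion_insert]
          have h1 := Set.ncard_union_le a (⋃₀ s)
          have h2 := ih (fun x hx => hsub (Set.mem_insert_of_mem a hx))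
          have h3 := hedgecard a (hsub (Set.mem_insert a s))
          rw [Set.ncard_insert_of_notMem ha hs]
          have := Nat.add_le_add h3 h2
          refine h1.trans (this.trans ?_)
          ring_nf
          omega
      exact key M hMfin hME
    have := hτ_le _ hZcov
    have := hZcard
    have : τ ≤ M.ncard * r := by omega
    calc τ ≤ M.ncard * r := this
      _ ≤ r * r := Nat.mul_le_mul_right r hMcard
  -- Step 2 : critical family E₀
  have hHardE : E ⊆ E ∧ ∀ T : Set W, IsCover E T → τ ≤ T.ncard := ⟨subset_rfl, hτ_le⟩
  obtain ⟨E₀, hE₀Hard, hE₀min⟩ := Set.Finite.exists_minimalFor Set.ncard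
    {F | F ⊆ E ∧ ∀ T : Set W, IsCover F T → τ ≤ T.ncard} (Set.toFinite _) ⟨E, hHardE⟩
  obtain ⟨hE₀E, hE₀hard⟩ := hE₀Hard
  have hE₀fin : E₀.Finite := Set.toFinite _
  have hE₀ne : E₀.Nonempty := by
    by_contra h
    rw [Set.not_nonempty_iff_eq_empty] at h
    have hcov : IsCover E₀ ∅ := by intro e he; rw [h] at he; exact absurd he (Set.notMem_empty e)
    have := hE₀hard ∅ hcov
    simp [Set.ncard_empty] at this
    omega
  obtain ⟨g₁, hg₁⟩ := hE₀ne
  have hcrit : ∀ g ∈ E₀, ∃ Tg : Set W, IsCover (E₀ \ {g}) Tg ∧ Tg.ncard ≤ τ - 1 ∧ Tg ∩ g = ∅ := by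
    intro g hg
    have hlt : (E₀ \ {g}).ncard < E₀.ncard := Set.ncard_diff_singleton_lt_of_mem hg hE₀fin
    have hnothard : ¬ ((E₀ \ {g}) ⊆ E ∧ ∀ T : Set W, IsCover (E₀ \ {g}) T → τ ≤ T.ncard) := by
      intro h
      have := hE₀min h (le_of_lt hlt)
      omega
    have hsubE : (E₀ \ {g}) ⊆ E := (Set.diff_subset).trans hE₀E
    push_neg at hnothard
    obtain ⟨T, hTcov, hTcard⟩ := hnothard hsubE
    refine ⟨T, hTcov, by omega, ?_⟩
    by_contra hne
    rw [← Ne, ← Set.nonempty_iff_ne_empty] at hne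
    have hcovE₀ : IsCover E₀ T := by
      intro e he
      by_cases heg : e = g
      · rw [heg, Set.inter_comm]; exact hne
      · exact hTcov e ⟨he, heg⟩
    have := hE₀hard T hcovE₀
    omega
  choose Tg hTgcov hTgcard hTgdisj using hcrit
  -- uncovered edges bound
  have huncov : ∀ T : Set W, τ ≤ {g | g ∈ E₀ ∧ g ∩ T = ∅}.ncard + T.ncard := by
    intro T
    set U := {g | g ∈ E₀ ∧ g ∩ T = ∅} with hU
    set f : Set W → W := fun g => if h : g.Nonempty then h.some else w₀ with hf
    have hcov : IsCover E₀ ((f '' U) ∪ T) := by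
      intro g hg
      by_cases hgT : (g ∩ T).Nonempty
      · obtain ⟨w, hw⟩ := hgT
        exact ⟨w, hw.1, Or.inr hw.2⟩
      · have hgU : g ∈ U := ⟨hg, Set.not_nonempty_iff_eq_empty.1 hgT⟩
        have hgne := hedge_ne g (hE₀E hg)
        refine ⟨f g, ?_, Or.inl (Set.mem_image_of_mem f hgU)⟩
        rw [hf]; simp only [dif_pos hgne]
        exact hgne.some_mem
    have h1 := hE₀hard _ hcov
    have h2 := Set.ncard_union_le (f '' U) T
    have h3 : (f '' U).ncard ≤ U.ncard := Set.ncard_image_le (Set.toFinite _)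
    omega
  -- Step 2b : size bound on E₀
  have hE₀card : E₀.ncard ≤ (r + r ^ 2).choose r := by
    set ew : W ≃ Fin (Fintype.card W) := Fintype.equivFin W with hew
    haveI : Fintype ↥E₀ := hE₀fin.fintype
    set A : ↥E₀ → Finset (Fin (Fintype.card W)) :=
      fun g => ((g : Set W).toFinite.toFinset).image ew with hA
    set B : ↥E₀ → Finset (Fin (Fintype.card W)) :=
      fun g => ((Tg g.1 g.2).toFinite.toFinset).image ew with hB
    have hAcard : ∀ g : ↥E₀, (A g).card ≤ r := by
      intro g
      rw [hA, Finset.card_image_of_injective _ ew.injective,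
        ← Set.ncard_eq_toFinset_card _ (Set.toFinite _)]
      exact hedgecard _ (hE₀E g.2)
    have hBcard : ∀ g : ↥E₀, (B g).card ≤ τ - 1 := by
      intro g
      rw [hB, Finset.card_image_of_injective _ ew.injective,
        ← Set.ncard_eq_toFinset_card _ (Set.toFinite _)]
      exact hTgcard g.1 g.2
    have hdisjAB : ∀ g : ↥E₀, Disjoint (A g) (B g) := by
      intro g
      rw [Finset.disjoint_left]
      intro w hwA hwB
      rw [hA, Finset.mem_image] at hwA
      rw [hB, Finset.mem_image] at hwB
      obtain ⟨x, hx, rfl⟩ := hwA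
      obtain ⟨y, hy, hxy⟩ := hwB
      have hyx : y = x := ew.injective hxy
      subst hyx
      rw [Set.Finite.mem_toFinset] at hx hy
      have hmem : y ∈ Tg g.1 g.2 ∩ (g : Set W) := ⟨hy, hx⟩
      rw [hTgdisj g.1 g.2] at hmem
      exact hmem
    have hcrossAB : ∀ g h : ↥E₀, g ≠ h → ¬ Disjoint (A g) (B h) := by
      intro g h hgh
      rw [Finset.not_disjoint_iff]
      have hgmem : (g : Set W) ∈ E₀ \ {(h : Set W)} :=
        ⟨g.2, fun hc => hgh (Subtype.ext hc)⟩
      obtain ⟨w, hw⟩ := hTgcov h.1 h.2 (g : Set W) hgmem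
      refine ⟨ew w, ?_, ?_⟩
      · rw [hA, Finset.mem_image]
        exact ⟨w, (Set.Finite.mem_toFinset _).2 hw.1, rfl⟩
      · rw [hB, Finset.mem_image]
        exact ⟨w, (Set.Finite.mem_toFinset _).2 hw.2, rfl⟩
    have hboll := bollobas A B r (τ - 1) hAcard hBcard hdisjAB hcrossAB
    have hcardE₀ : Fintype.card ↥E₀ = E₀.ncard := by
      rw [← Nat.card_eq_fintype_card, Nat.card_coe_set_eq]
    rw [hcardE₀] at hboll
    refine hboll.trans ?_
    apply Nat.choose_le_choose
    have hsq : r ^ 2 = r * r := pow_two r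
    omega
  -- Step 3 : the colouring
  set X' : Finset VG := X.erase xs with hX'
  have hX'sub : X' ⊆ X := Finset.erase_subset _ _
  have hX'card : X'.card = (r + r ^ 2).choose r := by
    rw [hX', Finset.card_erase_of_mem hxs, hXcard]
    omega
  set E₀f : Finset (Set W) := hE₀fin.toFinset with hE₀f
  have hE₀fcard : E₀f.card = E₀.ncard := (Set.ncard_eq_toFinset_card _ hE₀fin).symm
  have hcardle : Fintype.card ↥E₀f ≤ Fintype.card ↥X' := by
    rw [Fintype.card_coe, Fintype.card_coe, hE₀fcard, hX'card]
    exact hE₀card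
  obtain ⟨emb⟩ := Function.Embedding.nonempty_of_card_le hcardle
  set ψ : VG → Set W := fun v =>
    if h : ∃ gg : ↥E₀f, ((emb gg : ↥X') : VG) = v then ((h.choose : ↥E₀f) : Set W) else g₁ with hψ
  have hψmem : ∀ v, ψ v ∈ E₀ := by
    intro v
    rw [hψ]
    simp only []
    split
    · next h => exact (hE₀fin.mem_toFinset).1 (h.choose).2
    · exact hg₁
  have hψsurj : ∀ g ∈ E₀, ∃ x ∈ X', ψ x = g := by
    intro g hg
    have hgf : g ∈ E₀f := hE₀fin.mem_toFinset.2 hg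
    refine ⟨((emb ⟨g, hgf⟩ : ↥X') : VG), (emb ⟨g, hgf⟩).2, ?_⟩
    have hex : ∃ gg : ↥E₀f, ((emb gg : ↥X') : VG) = ((emb ⟨g, hgf⟩ : ↥X') : VG) :=
      ⟨⟨g, hgf⟩, rfl⟩
    rw [hψ]
    simp only [dif_pos hex]
    have h2 : emb hex.choose = emb ⟨g, hgf⟩ := Subtype.ext hex.choose_spec
    have h3 := emb.injective h2
    rw [h3]
  set Nv : VG → Finset VG := fun v => X'.filter (fun x => G.Adj v x) with hNv
  have hNvk : ∀ v, (Nv v).card ≤ k := by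
    intro v
    by_contra hcon
    push_neg at hcon
    obtain ⟨S0, hS0sub, hS0card⟩ := Finset.exists_subset_card_eq (s := Nv v) (n := k+1) (by omega)
    refine hXnbr S0 (fun x hx => hX'sub (Finset.mem_filter.1 (hS0sub hx)).1) (by omega) ⟨v, ?_⟩
    intro u hu
    exact (Finset.mem_filter.1 (hS0sub hu)).2
  have hTvex : ∀ v : VG, ∃ T : Set W,
      IsCover (ψ '' ((Nv v : Finset VG) : Set VG)) T ∧
        ∀ i : Fin r, (T ∩ part ⁻¹' {i}).ncard = 1 := by
    intro v
    obtain ⟨T, hT1, hT2⟩ := hprop (ψ '' ((Nv v : Finset VG) : Set VG))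
      (by rintro g ⟨x, hx, rfl⟩; exact hE₀E (hψmem x))
      (le_trans (Set.ncard_image_le (Set.toFinite _))
        (by rw [Set.ncard_coe_finset]; exact hNvk v))
    exact ⟨T, hT1, hT2⟩
  choose Tv hTvcov hTvpart using hTvex
  set wit : VG → VG → W := fun v x => if h : (ψ x ∩ Tv v).Nonempty then h.some else w₀ with hwit
  set idx : VG → VG → Fin r := fun v x => part (wit v x) with hidx
  set c' : VG → VG → Fin (r+1) := fun u v =>
    if u ∈ X' ∧ v ∉ X' ∧ G.Adj u v then (idx v u).castSucc
    else if v ∈ X' ∧ u ∉ X' ∧ G.Adj u v then (idx u v).castSucc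
    else Fin.last r with hc'
  have hc'symm : ∀ u v, c' u v = c' v u := by
    intro u v
    rw [hc']
    simp only []
    by_cases hA : u ∈ X' ∧ v ∉ X' ∧ G.Adj u v
    · have hA' : ¬ (v ∈ X' ∧ u ∉ X' ∧ G.Adj v u) := fun h => h.2.1 hA.1
      have hB' : u ∈ X' ∧ v ∉ X' ∧ G.Adj v u := ⟨hA.1, hA.2.1, hA.2.2.symm⟩
      rw [if_pos hA, if_neg hA', if_pos hB']
    · by_cases hB : v ∈ X' ∧ u ∉ X' ∧ G.Adj u v
      · have hA' : v ∈ X' ∧ u ∉ X' ∧ G.Adj v u := ⟨hB.1, hB.2.1, hB.2.2.symm⟩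
        rw [if_neg hA, if_pos hB, if_pos hA']
      · have h1 : ¬ (v ∈ X' ∧ u ∉ X' ∧ G.Adj v u) := fun h => hB ⟨h.1, h.2.1, h.2.2.symm⟩
        have h2 : ¬ (u ∈ X' ∧ v ∉ X' ∧ G.Adj v u) := fun h => hA ⟨h.1, h.2.1, h.2.2.symm⟩
        rw [if_neg hA, if_neg hB, if_neg h2, if_neg h1]
  set c : Sym2 VG → Fin (r+1) := Sym2.lift ⟨c', hc'symm⟩ with hcdef
  have hc : ∀ u v, c s(u,v) = c' u v := by
    intro u v
    rw [hcdef]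
    exact Sym2.lift_mk _ _ _
  set valS : Fin r → VG → Set W := fun j v =>
    if v ∈ X' then ψ v ∩ part ⁻¹' {j} else Tv v ∩ part ⁻¹' {j} with hvalS
  have hval1 : ∀ (j : Fin r) (v : VG), (valS j v).ncard = 1 := by
    intro j v
    rw [hvalS]
    simp only []
    by_cases h : v ∈ X'
    · rw [if_pos h]
      exact hpart _ (hE₀E (hψmem v)) j
    · rw [if_neg h]
      exact hTvpart v j
  have hedgeinv : ∀ (j : Fin r) (u v : VG), G.Adj u v → c s(u,v) = j.castSucc →
      valS j u = valS j v := by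
    intro j u v hadj hcol
    rw [hc u v, hc'] at hcol
    simp only [] at hcol
    by_cases hA : u ∈ X' ∧ v ∉ X' ∧ G.Adj u v
    · rw [if_pos hA] at hcol
      have hj : idx v u = j := Fin.castSucc_injective _ hcol
      have hne : (ψ u ∩ Tv v).Nonempty := by
        apply hTvcov v (ψ u)
        exact ⟨u, Finset.mem_coe.2 (Finset.mem_filter.2 ⟨hA.1, hadj.symm⟩), rfl⟩
      have hwmem : wit v u ∈ ψ u ∩ Tv v := by
        rw [hwit]; simp only [dif_pos hne]; exact hne.some_mem
      have hpartw : part (wit v u) = j := by rw [← hj, hidx]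
      have h1 : valS j u = {wit v u} := by
        rw [hvalS]; simp only []; rw [if_pos hA.1]
        obtain ⟨w, hw⟩ := Set.ncard_eq_one.1 (hpart _ (hE₀E (hψmem u)) j)
        have hin : wit v u ∈ ψ u ∩ part ⁻¹' {j} := ⟨hwmem.1, by simp [hpartw]⟩
        rw [hw] at hin ⊢
        rw [Set.mem_singleton_iff.1 hin]
      have h2 : valS j v = {wit v u} := by
        rw [hvalS]; simp only []; rw [if_neg hA.2.1]
        obtain ⟨w, hw⟩ := Set.ncard_eq_one.1 (hTvpart v j)
        have hin : wit v u ∈ Tv v ∩ part ⁻¹' {j} := ⟨hwmem.2, by simp [hpartw]⟩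
        rw [hw] at hin ⊢
        rw [Set.mem_singleton_iff.1 hin]
      rw [h1, h2]
    · by_cases hB : v ∈ X' ∧ u ∉ X' ∧ G.Adj u v
      · rw [if_neg hA, if_pos hB] at hcol
        have hj : idx u v = j := Fin.castSucc_injective _ hcol
        have hne : (ψ v ∩ Tv u).Nonempty := by
          apply hTvcov u (ψ v)
          exact ⟨v, Finset.mem_coe.2 (Finset.mem_filter.2 ⟨hB.1, hadj⟩), rfl⟩
        have hwmem : wit u v ∈ ψ v ∩ Tv u := by
          rw [hwit]; simp only [dif_pos hne]; exact hne.some_mem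
        have hpartw : part (wit u v) = j := by rw [← hj, hidx]
        have h1 : valS j v = {wit u v} := by
          rw [hvalS]; simp only []; rw [if_pos hB.1]
          obtain ⟨w, hw⟩ := Set.ncard_eq_one.1 (hpart _ (hE₀E (hψmem v)) j)
          have hin : wit u v ∈ ψ v ∩ part ⁻¹' {j} := ⟨hwmem.1, by simp [hpartw]⟩
          rw [hw] at hin ⊢
          rw [Set.mem_singleton_iff.1 hin]
        have h2 : valS j u = {wit u v} := by
          rw [hvalS]; simp only []; rw [if_neg hB.2.1]
          obtain ⟨w, hw⟩ := Set.ncard_eq_one.1 (hTvpart u j)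
          have hin : wit u v ∈ Tv u ∩ part ⁻¹' {j} := ⟨hwmem.2, by simp [hpartw]⟩
          rw [hw] at hin ⊢
          rw [Set.mem_singleton_iff.1 hin]
        rw [h1, h2]
      · rw [if_neg hA, if_neg hB] at hcol
        exact absurd hcol (Fin.castSucc_lt_last j).ne'
  have hreachinv : ∀ (j : Fin r) (u v : VG),
      (colorSubgraph G c j.castSucc).Reachable u v → valS j u = valS j v := by
    intro j u v hr
    obtain ⟨p⟩ := hr
    induction p with
    | nil => rfl
    | cons h p ih =>
      obtain ⟨h1, h2⟩ := h
      exact (hedgeinv j _ _ h1 h2).trans ih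
  have hisol : ∀ (i : Fin (r+1)) (x : VG), (∀ y, G.Adj x y → c s(x,y) ≠ i) →
      ∀ u, (colorSubgraph G c i).Reachable u x → u = x := by
    intro i x hx u hr
    obtain ⟨p⟩ := hr.symm
    cases p with
    | nil => rfl
    | cons h p =>
      obtain ⟨h1, h2⟩ := h
      exact absurd h2 (hx _ h1)
  have hvnotX : ∀ x ∈ X, ∀ v, G.Adj x v → v ∉ X := by
    intro x hx v hadj hv
    exact hXind x hx v hv (G.ne_of_adj hadj) hadj
  have hX'col : ∀ x ∈ X', ∀ v, G.Adj x v → c s(x,v) = (idx v x).castSucc := by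
    intro x hx v hadj
    have hv : v ∉ X' := fun h => hvnotX x (hX'sub hx) v hadj (hX'sub h)
    rw [hc, hc']
    simp only []
    rw [if_pos ⟨hx, hv, hadj⟩]
  have hxscol : ∀ v, G.Adj xs v → c s(xs,v) = Fin.last r := by
    intro v hadj
    have hv : v ∉ X := hvnotX xs hxs v hadj
    have h1 : ¬ (xs ∈ X' ∧ v ∉ X' ∧ G.Adj xs v) := fun h => (Finset.notMem_erase xs X) h.1
    have h2 : ¬ (v ∈ X' ∧ xs ∉ X' ∧ G.Adj xs v) := fun h => hv (hX'sub h.1)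
    rw [hc, hc']
    simp only []
    rw [if_neg h1, if_neg h2]
  -- Step 4 : the counting
  refine ⟨c, ?_⟩
  intro S hS
  by_contra hcon
  push_neg at hcon
  have hScard : S.card ≤ τ := by omega
  choose fp hfpS hfpreach using hS
  set p0 := fp xs with hp0
  have hp0S : p0 ∈ S := hfpS xs
  have hxs_isol : ∀ j : Fin r, ∀ u, (colorSubgraph G c j.castSucc).Reachable u xs → u = xs := by
    intro j
    apply hisol
    intro y hy
    rw [hxscol y hy]
    exact (Fin.castSucc_lt_last j).ne'
  have hX'_isol : ∀ x ∈ X', ∀ u, (colorSubgraph G c (Fin.last r)).Reachable u x → u = x := by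
    intro x hx
    apply hisol
    intro y hy
    rw [hX'col x hx y hy]
    exact (Fin.castSucc_lt_last (idx y x)).ne
  have hfpne : ∀ x ∈ X', fp x ≠ p0 := by
    intro x hx heq
    have hxxs : x ≠ xs := Finset.ne_of_mem_erase hx
    have h1 := hfpreach xs
    rw [← hp0] at h1
    have h2 := hfpreach x
    rw [heq] at h2
    by_cases hl : p0.1 = Fin.last r
    · rw [hl] at h1 h2
      have hux : p0.2 = x := hX'_isol x hx _ h2
      rw [hux] at h1
      exact hxxs (hX'_isol x hx xs h1.symm).symm
    · obtain ⟨j, hj⟩ := Fin.eq_castSucc_of_ne_last hl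
      rw [← hj] at h1 h2
      have hus : p0.2 = xs := hxs_isol j _ h1
      rw [hus] at h2
      exact hxxs (hxs_isol j x h2.symm)
  set Se := S.erase p0 with hSe
  set Sg := Se.filter (fun p => p.1 ≠ Fin.last r) with hSg
  set Sb := Se.filter (fun p => p.1 = Fin.last r) with hSb
  set wp : (Fin (r+1) × VG) → W := fun p =>
    if h : ∃ j : Fin r, p.1 = j.castSucc then
      (Set.ncard_eq_one.1 (hval1 h.choose p.2)).choose else w₀ with hwp
  have hwpspec : ∀ (p : Fin (r+1) × VG) (j : Fin r), p.1 = j.castSucc →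
      valS j p.2 = {wp p} := by
    intro p j hj
    have hex : ∃ j : Fin r, p.1 = j.castSucc := ⟨j, hj⟩
    rw [hwp]
    simp only [dif_pos hex]
    have hje : hex.choose = j :=
      Fin.castSucc_injective _ (hex.choose_spec.symm.trans hj)
    rw [← hje]
    exact (Set.ncard_eq_one.1 (hval1 hex.choose p.2)).choose_spec
  set TT : Set W := wp '' (Sg : Set (Fin (r+1) × VG)) with hTT
  have hTTcard : TT.ncard ≤ Sg.card := by
    refine le_trans (Set.ncard_image_le (Set.toFinite _)) ?_
    rw [Set.ncard_coe_finset]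
  have hgood : ∀ x ∈ X', (fp x).1 ≠ Fin.last r → (ψ x ∩ TT).Nonempty := by
    intro x hx hlast
    obtain ⟨j, hj⟩ := Fin.eq_castSucc_of_ne_last hlast
    have hreach := hfpreach x
    rw [← hj] at hreach
    have hvv := hreachinv j _ _ hreach
    have hval := hwpspec (fp x) j hj.symm
    rw [hval] at hvv
    have hxval : valS j x = ψ x ∩ part ⁻¹' {j} := by
      rw [hvalS]; simp only []; rw [if_pos hx]
    rw [hxval] at hvv
    have hwmem : wp (fp x) ∈ ψ x ∩ part ⁻¹' {j} := by
      rw [← hvv]; exact Set.mem_singleton _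
    refine ⟨wp (fp x), hwmem.1, ?_⟩
    rw [hTT]
    refine Set.mem_image_of_mem _ ?_
    rw [Finset.mem_coe, hSg, Finset.mem_filter]
    exact ⟨Finset.mem_erase.2 ⟨hfpne x hx, hfpS x⟩, hlast⟩
  have hbad : ∀ x ∈ X', (fp x).1 = Fin.last r → (fp x).2 = x := by
    intro x hx hlast
    have hreach := hfpreach x
    rw [hlast] at hreach
    exact hX'_isol x hx _ hreach
  set U := {g | g ∈ E₀ ∧ g ∩ TT = ∅} with hUdef
  set F : Set W → (Fin (r+1) × VG) := fun g =>
    if h : ∃ x, x ∈ X' ∧ ψ x = g then fp h.choose else p0 with hF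
  have hFspec : ∀ g ∈ U, F g ∈ Sb ∧ (F g).2 ∈ X' ∧ ψ ((F g).2) = g := by
    intro g hg
    obtain ⟨hg1, hg2⟩ := hg
    have hex : ∃ x, x ∈ X' ∧ ψ x = g := by
      obtain ⟨x, hx1, hx2⟩ := hψsurj g hg1
      exact ⟨x, hx1, hx2⟩
    rw [hF]
    simp only [dif_pos hex]
    obtain ⟨hxX', hxψ⟩ := hex.choose_spec
    have hlast : (fp hex.choose).1 = Fin.last r := by
      by_contra hne
      have hnon := hgood hex.choose hxX' hne
      rw [hxψ] at hnon
      rw [hg2] at hnon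
      exact Set.not_nonempty_empty hnon
    have hfp2 : (fp hex.choose).2 = hex.choose := hbad hex.choose hxX' hlast
    refine ⟨?_, ?_, ?_⟩
    · rw [hSb, Finset.mem_filter]
      exact ⟨Finset.mem_erase.2 ⟨hfpne hex.choose hxX', hfpS hex.choose⟩, hlast⟩
    · rw [hfp2]; exact hxX'
    · rw [hfp2]; exact hxψ
  have hUcard : U.ncard ≤ Sb.card := by
    rw [← Set.ncard_coe_finset Sb]
    exact Set.ncard_le_ncard_of_injOn F
      (fun g hg => Finset.mem_coe.2 (hFspec g hg).1)
      (fun g1 h1 g2 h2 hFe => by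
        have s1 := hFspec g1 h1
        have s2 := hFspec g2 h2
        rw [← s1.2.2, ← s2.2.2, hFe])
      (Set.toFinite _)
  have h1 := huncov TT
  rw [← hUdef] at h1
  have hunion : Sg ∪ Sb = Se := by
    ext p
    rw [Finset.mem_union, hSg, hSb, Finset.mem_filter, Finset.mem_filter]
    constructor
    · rintro (h | h) <;> exact h.1
    · intro h
      by_cases hl : p.1 = Fin.last r
      · exact Or.inr ⟨h, hl⟩
      · exact Or.inl ⟨h, hl⟩
  have hdisjgb : Disjoint Sg Sb := by
    rw [Finset.disjoint_left]
    intro p hp1 hp2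
    rw [hSg, Finset.mem_filter] at hp1
    rw [hSb, Finset.mem_filter] at hp2
    exact hp1.2 hp2.2
  have h2 : Sg.card + Sb.card = Se.card := by
    rw [← Finset.card_union_of_disjoint hdisjgb, hunion]
  have hSecard : Se.card = S.card - 1 := by rw [hSe]; exact Finset.card_erase_of_mem hp0S
  have h3 : 1 ≤ S.card := Finset.card_pos.2 ⟨p0, hp0S⟩
  have hUfin : U.ncard = U.ncard := rfl
  omega
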